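/- arXiv:2005.05697 — 4 statements merged into one kernel-verified Lean document; each statement's English description precedes it below -/
import Mathlib

section
/- Let Γ be a countable discrete group and ρ : Γ ↷ (X,ν) a measure-class-preserving measurable action on a probability space (X,ν). Then ρ is strongly ergodic if and only if ρ is asymptotically expanding in measure, i.e., for every α ∈ (0,1/2] there exist a constant c(α) > 0 and a finite subset S(α) ⊆ Γ such that ν(⋃_{s∈S(α)} s·A) > (1+c(α))·ν(A) for every measurable subset A ⊆ X with α ≤ ν(A) ≤ 1/2. -/
open MeasureTheory Set Filter Pointwise ENNReal

/-- The union `S · A = ⋃ s ∈ S, s • A` of the translates of `A` by elements of the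
finite set `S ⊆ Γ`. -/
def finSMul {Γ X : Type*} [Group Γ] [MulAction Γ X] (S : Finset Γ) (A : Set X) : Set X :=
  ⋃ s ∈ S, s • A

/-- `S` is a finite symmetric subset of `Γ` containing the identity. -/
def SymmFin {Γ : Type*} [Group Γ] (S : Finset Γ) : Prop :=
  (1 : Γ) ∈ S ∧ ∀ s ∈ S, s⁻¹ ∈ S

/-- The `S`-boundary `∂_S A = (S·A) \ A`. -/
def finBdry {Γ X : Type*} [Group Γ] [MulAction Γ X] (S : Finset Γ) (A : Set X) : Set X :=
  finSMul S A \ A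

/-- `Y` is a domain of `(c,S)`-expansion: `ν((S·A) ∩ Y) > (1+c)·ν(A)` for every
measurable `A ⊆ Y` with `0 < ν(A) ≤ ν(Y)/2`. -/
def ExpandsOn {Γ X : Type*} [Group Γ] [MulAction Γ X] [MeasurableSpace X]
    (ν : MeasureTheory.Measure X) (Y : Set X) (c : ℝ) (S : Finset Γ) : Prop :=
  ∀ A : Set X, MeasurableSet A → A ⊆ Y → 0 < ν A → ν A ≤ ν Y / 2 →
    (1 + ENNReal.ofReal c) * ν A < ν (finSMul S A ∩ Y)

/-- `Y` is a domain of expansion: `(c,S)`-expansion for some `c > 0` and some finite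
symmetric `S ∋ 1`. -/
def ExpDomain (Γ : Type*) {X : Type*} [Group Γ] [MulAction Γ X] [MeasurableSpace X]
    (ν : MeasureTheory.Measure X) (Y : Set X) : Prop :=
  ∃ c : ℝ, 0 < c ∧ ∃ S : Finset Γ, SymmFin S ∧ ExpandsOn ν Y c S

/-- The `(α,c,S)` asymptotic-expansion estimate on `Y`: `ν((S·A) ∩ Y) > (1+c)·ν(A)` for
every measurable `A ⊆ Y` with `α·ν(Y) ≤ ν(A) ≤ ν(Y)/2`. -/
def AsymExpandsOn {Γ X : Type*} [Group Γ] [MulAction Γ X] [MeasurableSpace X]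
    (ν : MeasureTheory.Measure X) (Y : Set X) (α c : ℝ) (S : Finset Γ) : Prop :=
  ∀ A : Set X, MeasurableSet A → A ⊆ Y → ENNReal.ofReal α * ν Y ≤ ν A → ν A ≤ ν Y / 2 →
    (1 + ENNReal.ofReal c) * ν A < ν (finSMul S A ∩ Y)

/-- `Y` is a domain of asymptotic expansion. -/
def AsymExpDomain (Γ : Type*) {X : Type*} [Group Γ] [MulAction Γ X] [MeasurableSpace X]
    (ν : MeasureTheory.Measure X) (Y : Set X) : Prop :=
  ∀ α : ℝ, 0 < α → α ≤ 1 / 2 →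
    ∃ c : ℝ, 0 < c ∧ ∃ S : Finset Γ, SymmFin S ∧ AsymExpandsOn ν Y α c S

/-- The action of `Γ` on the probability space `(X,ν)` is strongly ergodic: every almost
invariant sequence of measurable sets is asymptotically trivial. -/
def StronglyErgodic (Γ : Type*) {X : Type*} [Group Γ] [MulAction Γ X] [MeasurableSpace X]
    (ν : MeasureTheory.Measure X) : Prop :=
  ∀ C : ℕ → Set X, (∀ n, MeasurableSet (C n)) →
    (∀ γ : Γ, Filter.Tendsto (fun n => ν (symmDiff (C n) (γ • C n))) Filter.atTop (nhds 0)) →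
    Filter.Tendsto (fun n => ν (C n) * (1 - ν (C n))) Filter.atTop (nhds 0)

/-- The action of `Γ` on `(X,ν)` is measure-class-preserving. -/
def MeasClassPres (Γ : Type*) {X : Type*} [Group Γ] [MulAction Γ X] [MeasurableSpace X]
    (ν : MeasureTheory.Measure X) : Prop :=
  ∀ (γ : Γ) (A : Set X), MeasurableSet A → (ν (γ • A) = 0 ↔ ν A = 0)

/-- The action of `Γ` on `(X,ν)` is ergodic: every invariant measurable set is null or
conull. -/
def ErgodicAct (Γ : Type*) {X : Type*} [Group Γ] [MulAction Γ X] [MeasurableSpace X]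
    (ν : MeasureTheory.Measure X) : Prop :=
  ∀ A : Set X, MeasurableSet A → (∀ γ : Γ, γ • A = A) → ν A = 0 ∨ ν Aᶜ = 0

/-- `W` admits an exhaustion by measurable subsets satisfying `P`. -/
def ExhaustionBy {X : Type*} [MeasurableSpace X] (ν : MeasureTheory.Measure X)
    (W : Set X) (P : Set X → Prop) : Prop :=
  ∃ Y : ℕ → Set X, Monotone Y ∧ (∀ n, MeasurableSet (Y n)) ∧ (∀ n, Y n ⊆ W) ∧
    (∀ n, P (Y n)) ∧ ν (W \ ⋃ n, Y n) = 0

section Aux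

variable {Γ X : Type*} [Group Γ] [MulAction Γ X] [MeasurableSpace X]

omit [MeasurableSpace X] in
lemma smul_set_eq_preimage' (g : Γ) (A : Set X) : g • A = (fun x => g⁻¹ • x) ⁻¹' A := by
  ext x; simp [Set.mem_smul_set_iff_inv_smul_mem]

lemma measurableSet_smul' (hmeas : ∀ γ : Γ, Measurable fun x : X => γ • x)
    (g : Γ) {A : Set X} (hA : MeasurableSet A) : MeasurableSet (g • A) := by
  rw [smul_set_eq_preimage']; exact (hmeas g⁻¹) hA

lemma mcp_epsdelta {ν : MeasureTheory.Measure X} [IsProbabilityMeasure ν]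
    (hmeas : ∀ γ : Γ, Measurable fun x : X => γ • x)
    (hmcp : ∀ (γ : Γ) (A : Set X), MeasurableSet A → (ν (γ • A) = 0 ↔ ν A = 0))
    (γ : Γ) {ε : ℝ≥0∞} (hε : 0 < ε) :
    ∃ δ : ℝ≥0∞, 0 < δ ∧ ∀ B : Set X, MeasurableSet B → ν B ≤ δ → ν (γ • B) ≤ ε := by
  by_contra h
  push_neg at h
  have h2 : (0:ℝ≥0∞) < 2⁻¹ := by simp
  choose B hBm hBν hBε using fun n : ℕ => h ((2:ℝ≥0∞)⁻¹ ^ n) (ENNReal.pow_pos h2 n)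
  set t : ℕ → Set X := fun n => ⋃ k, B (n + k) with ht
  have htm : ∀ n, MeasurableSet (t n) := fun n => MeasurableSet.iUnion fun k => hBm _
  have htanti : Antitone t := antitone_nat_of_succ_le fun n x hx => by
    obtain ⟨k, hk⟩ := mem_iUnion.1 hx
    exact mem_iUnion.2 ⟨k + 1, by rwa [show n + (k + 1) = n + 1 + k by ring]⟩
  have htν : ∀ n, ν (t n) ≤ 2 * 2⁻¹ ^ n := by
    intro n
    calc ν (t n) ≤ ∑' k, ν (B (n + k)) := measure_iUnion_le _
      _ ≤ ∑' k, (2:ℝ≥0∞)⁻¹ ^ (n + k) := ENNReal.tsum_le_tsum fun k => hBν _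
      _ = (2:ℝ≥0∞)⁻¹ ^ n * ∑' k, (2:ℝ≥0∞)⁻¹ ^ k := by
          rw [← ENNReal.tsum_mul_left]; exact tsum_congr fun k => (pow_add _ n k)
      _ = (2:ℝ≥0∞)⁻¹ ^ n * 2 := by
          rw [ENNReal.tsum_geometric, ENNReal.one_sub_inv_two, inv_inv]
      _ = 2 * 2⁻¹ ^ n := mul_comm _ _
  have hpowlim : Tendsto (fun n : ℕ => 2 * (2:ℝ≥0∞)⁻¹ ^ n) atTop (nhds 0) := by
    have := ENNReal.Tendsto.const_mul
      (ENNReal.tendsto_pow_atTop_nhds_zero_of_lt_one (by norm_num : (2:ℝ≥0∞)⁻¹ < 1))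
      (Or.inr (by norm_num : (2:ℝ≥0∞) ≠ ⊤))
    simpa using this
  have htν0 : ν (⋂ n, t n) = 0 := by
    refine le_antisymm ?_ (zero_le)
    exact ge_of_tendsto' hpowlim fun n => (measure_mono (iInter_subset t n)).trans (htν n)
  have hγ0 : ν (γ • ⋂ n, t n) = 0 := (hmcp γ _ (MeasurableSet.iInter htm)).2 htν0
  have him : γ • ⋂ n, t n = ⋂ n, γ • t n := Set.smul_set_iInter ..
  have htend : Tendsto (fun n => ν (γ • t n)) atTop (nhds (ν (⋂ n, γ • t n))) :=
    tendsto_measure_iInter_atTop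
      (fun n => (measurableSet_smul' hmeas γ (htm n)).nullMeasurableSet)
      (fun a b hab => Set.smul_set_mono (htanti hab))
      ⟨0, measure_ne_top ν _⟩
  have hge : ε ≤ ν (⋂ n, γ • t n) := by
    refine ge_of_tendsto' htend fun n => ?_
    exact le_trans (hBε n).le
      (measure_mono (Set.smul_set_mono (subset_iUnion_of_subset 0 (by simp))))
  rw [← him, hγ0] at hge
  exact absurd (le_antisymm hge (zero_le)) (ne_of_gt hε)

lemma smul_tendsto_zero' {ν : MeasureTheory.Measure X} [IsProbabilityMeasure ν]
    (hmeas : ∀ γ : Γ, Measurable fun x : X => γ • x)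
    (hmcp : ∀ (γ : Γ) (A : Set X), MeasurableSet A → (ν (γ • A) = 0 ↔ ν A = 0))
    (γ : Γ) (B : ℕ → Set X) (hBm : ∀ n, MeasurableSet (B n))
    (h : Tendsto (fun n => ν (B n)) atTop (nhds 0)) :
    Tendsto (fun n => ν (γ • B n)) atTop (nhds 0) := by
  rw [ENNReal.tendsto_nhds_zero] at h ⊢
  intro ε hε
  obtain ⟨δ, hδ, hd⟩ := mcp_epsdelta hmeas hmcp γ hε
  filter_upwards [h δ hδ] with n hn
  exact hd _ (hBm n) hn

end Aux

/-- Proposition 3.3: a measure-class-preserving action on a probability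
space is strongly ergodic iff it is asymptotically expanding in measure. -/
theorem stronglyErgodic_iff_asymptoticallyExpanding
    {Γ X : Type*} [Group Γ] [Countable Γ] [MulAction Γ X] [MeasurableSpace X]
    (ν : Measure X) [IsProbabilityMeasure ν]
    (hmeas : ∀ γ : Γ, Measurable fun x : X => γ • x)
    (hmcp : MeasClassPres Γ ν) :
    StronglyErgodic Γ ν ↔
      ∀ α : ℝ, 0 < α → α ≤ 1 / 2 → ∃ c : ℝ, 0 < c ∧ ∃ S : Finset Γ,
        ∀ A : Set X, MeasurableSet A → ENNReal.ofReal α ≤ ν A → ν A ≤ 1 / 2 →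
          (1 + ENNReal.ofReal c) * ν A < ν (finSMul S A) := by
  have h12 : (1 : ℝ≥0∞) / 2 = 2⁻¹ := one_div 2
  constructor
  · -- strongly ergodic → expansion
    intro hSE α hα hα2
    by_contra hno
    push_neg at hno
    classical
    obtain ⟨e, he⟩ := exists_surjective_nat Γ
    set S : ℕ → Finset Γ := fun n => insert (1:Γ)
      (((Finset.range (n+1)).image e) ∪ ((Finset.range (n+1)).image fun k => (e k)⁻¹)) with hSdef
    have hcn : ∀ n : ℕ, (0:ℝ) < 1/(n+1) := fun n => by positivity
    choose C hCm hCα hC2 hCS using fun n : ℕ => hno (1/(n+1)) (hcn n) (S n)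
    have hsub : ∀ n, C n ⊆ finSMul (S n) (C n) := by
      intro n x hx
      refine Set.mem_iUnion₂.2 ⟨1, Finset.mem_insert_self 1 _, ?_⟩
      simpa [Set.mem_smul_set_iff_inv_smul_mem] using hx
    have hbd : ∀ n, ν (finSMul (S n) (C n) \ C n) ≤ ENNReal.ofReal (1/(n+1)) := by
      intro n
      have hfin : ν (C n) ≠ ⊤ := measure_ne_top ν _
      rw [measure_diff (hsub n) (hCm n).nullMeasurableSet hfin]
      calc ν (finSMul (S n) (C n)) - ν (C n)
          ≤ (1 + ENNReal.ofReal (1/(n+1))) * ν (C n) - ν (C n) :=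
            tsub_le_tsub_right (hCS n) _
        _ = ENNReal.ofReal (1/(n+1)) * ν (C n) := by
            rw [add_mul, one_mul, ENNReal.add_sub_cancel_left hfin]
        _ ≤ ENNReal.ofReal (1/(n+1)) * 1 := by
            exact mul_le_mul_right prob_le_one _
        _ = ENNReal.ofReal (1/(n+1)) := mul_one _
    have hofreal : Tendsto (fun n : ℕ => ENNReal.ofReal (1/(n+1))) atTop (nhds 0) := by
      have := ENNReal.tendsto_ofReal (tendsto_one_div_add_atTop_nhds_zero_nat)
      simpa using this
    have hmemS : ∀ (γ' : Γ) (m : ℕ), e m = γ' → ∀ n ≥ m, γ' ∈ S n := by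
      intro γ' m hm n hn
      refine Finset.mem_insert.2 (Or.inr (Finset.mem_union_left _
        (Finset.mem_image.2 ⟨m, ?_, hm⟩)))
      exact Finset.mem_range.2 (by omega)
    have key : ∀ γ' : Γ, Tendsto (fun n => ν (γ' • C n \ C n)) atTop (nhds 0) := by
      intro γ'
      obtain ⟨m, hm⟩ := he γ'
      refine tendsto_of_tendsto_of_tendsto_of_le_of_le' tendsto_const_nhds hofreal
        (Eventually.of_forall fun n => zero_le) ?_
      filter_upwards [eventually_ge_atTop m] with n hn
      have hmem : γ' ∈ S n := hmemS γ' m hm n hn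
      have hsub2 : γ' • C n \ C n ⊆ finSMul (S n) (C n) \ C n := by
        refine diff_subset_diff_left fun x hx => Set.mem_iUnion₂.2 ⟨γ', hmem, hx⟩
      exact (measure_mono hsub2).trans (hbd n)
    have hsd : ∀ γ' : Γ, Tendsto (fun n => ν (symmDiff (C n) (γ' • C n))) atTop (nhds 0) := by
      intro γ'
      have h2 : Tendsto (fun n => ν (C n \ γ' • C n)) atTop (nhds 0) := by
        have hB : ∀ n, C n \ γ' • C n = γ' • ((γ'⁻¹ • C n) \ C n) := by
          intro n; rw [Set.smul_set_sdiff, smul_inv_smul]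
        simp only [hB]
        exact smul_tendsto_zero' hmeas hmcp γ' _
          (fun n => (measurableSet_smul' hmeas γ'⁻¹ (hCm n)).diff (hCm n)) (key γ'⁻¹)
      have hle : ∀ n, ν (symmDiff (C n) (γ' • C n)) ≤
          ν (C n \ γ' • C n) + ν (γ' • C n \ C n) := by
        intro n
        rw [symmDiff_def]
        exact measure_union_le _ _
      refine tendsto_of_tendsto_of_tendsto_of_le_of_le' tendsto_const_nhds ?_
        (Eventually.of_forall fun n => zero_le) (Eventually.of_forall hle)
      simpa using h2.add (key γ')
    have hf := hSE C hCm hsd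
    set b : ℝ≥0∞ := ENNReal.ofReal α * 2⁻¹ with hb
    have hb0 : 0 < b := ENNReal.mul_pos (by simpa using hα) (by norm_num)
    have hble : ∀ n, b ≤ ν (C n) * (1 - ν (C n)) := by
      intro n
      refine mul_le_mul' (hCα n) ?_
      calc (2:ℝ≥0∞)⁻¹ = 1 - 2⁻¹ := ENNReal.one_sub_inv_two.symm
        _ ≤ 1 - ν (C n) := tsub_le_tsub_left (h12 ▸ hC2 n) 1
    have : b ≤ 0 := ge_of_tendsto' hf hble
    exact absurd (le_antisymm this (zero_le)) (ne_of_gt hb0)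
  · -- expansion → strongly ergodic
    intro hExp C hCm hCinv
    rw [ENNReal.tendsto_nhds_zero]
    intro ε hε
    by_cases h1 : 1 ≤ ε
    · refine Eventually.of_forall fun n => le_trans ?_ h1
      exact le_trans (mul_le_mul' prob_le_one tsub_le_self) (by simp)
    · push_neg at h1
      have hεtop : ε ≠ ⊤ := (h1.trans (by norm_num)).ne
      have hεt : 0 < ε.toReal := ENNReal.toReal_pos hε.ne' hεtop
      set α : ℝ := min ε.toReal (1/2) with hαdef
      have hα : 0 < α := lt_min hεt (by norm_num)
      have hα2 : α ≤ 1/2 := min_le_right _ _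
      obtain ⟨c, hc, S, hS⟩ := hExp α hα hα2
      set D : ℕ → Set X := fun n => if ν (C n) ≤ 1/2 then C n else (C n)ᶜ with hDdef
      have hDm : ∀ n, MeasurableSet (D n) := fun n => by
        simp only [hDdef]; split_ifs; exacts [hCm n, (hCm n).compl]
      have hD2 : ∀ n, ν (D n) ≤ 1/2 := by
        intro n
        by_cases h : ν (C n) ≤ 1/2
        · simp only [hDdef, if_pos h]; exact h
        · push_neg at h
          simp only [hDdef, if_neg (not_le.2 h)]
          rw [prob_compl_eq_one_sub (hCm n)]
          calc (1:ℝ≥0∞) - ν (C n) ≤ 1 - 1/2 := tsub_le_tsub_left h.le 1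
            _ = 1/2 := by rw [h12, ENNReal.one_sub_inv_two]
      have hfD : ∀ n, ν (C n) * (1 - ν (C n)) ≤ ν (D n) := by
        intro n
        by_cases h : ν (C n) ≤ 1/2
        · simp only [hDdef, if_pos h]
          exact le_trans (mul_le_mul' le_rfl tsub_le_self) (by simp)
        · simp only [hDdef, if_neg h]
          rw [prob_compl_eq_one_sub (hCm n)]
          exact le_trans (mul_le_mul' prob_le_one le_rfl) (by simp)
      have hsymm : ∀ (s : Γ) (n), ν (symmDiff (D n) (s • D n)) = ν (symmDiff (C n) (s • C n)) := by
        intro s n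
        by_cases h : ν (C n) ≤ 1/2
        · simp only [hDdef, if_pos h]
        · simp only [hDdef, if_neg h]
          rw [Set.smul_set_compl, compl_symmDiff_compl]
      have hbd : ∀ n, ν (finSMul S (D n) \ D n) ≤ ∑ s ∈ S, ν (symmDiff (C n) (s • C n)) := by
        intro n
        have hsub : finSMul S (D n) \ D n ⊆ ⋃ s ∈ S, (s • D n \ D n) := by
          intro x hx
          obtain ⟨hx1, hx2⟩ := hx
          obtain ⟨s, hs, hxs⟩ := Set.mem_iUnion₂.1 hx1
          exact Set.mem_iUnion₂.2 ⟨s, hs, hxs, hx2⟩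
        calc ν (finSMul S (D n) \ D n) ≤ ν (⋃ s ∈ S, (s • D n \ D n)) := measure_mono hsub
          _ ≤ ∑ s ∈ S, ν (s • D n \ D n) := measure_biUnion_finset_le S _
          _ ≤ ∑ s ∈ S, ν (symmDiff (C n) (s • C n)) := by
              refine Finset.sum_le_sum fun s _ => ?_
              rw [← hsymm s n, symmDiff_def]
              exact measure_mono le_sup_right
      have htendsum : Tendsto (fun n => ∑ s ∈ S, ν (symmDiff (C n) (s • C n))) atTop (nhds 0) := by
        have := tendsto_finset_sum S (fun s _ => hCinv s)
        simpa using this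
      have hpos : (0:ℝ≥0∞) < ENNReal.ofReal c * ENNReal.ofReal α :=
        ENNReal.mul_pos (by simpa using hc) (by simpa using hα)
      filter_upwards [ENNReal.tendsto_nhds_zero.1 htendsum _ hpos,
        htendsum.eventually_lt_const hpos] with n hn hn'
      by_cases hsmall : ν (D n) < ENNReal.ofReal α
      · refine le_trans (hfD n) (le_trans hsmall.le ?_)
        calc ENNReal.ofReal α ≤ ENNReal.ofReal ε.toReal :=
              ENNReal.ofReal_le_ofReal (min_le_left _ _)
          _ = ε := ENNReal.ofReal_toReal hεtop
      · push_neg at hsmall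
        exfalso
        have hDfin : ν (D n) ≠ ⊤ := measure_ne_top ν _
        have hlt := hS (D n) (hDm n) hsmall (hD2 n)
        have h2 : ν (finSMul S (D n)) ≤ ν (finSMul S (D n) \ D n) + ν (D n) :=
          le_trans (measure_mono (by rw [Set.diff_union_self]; exact Set.subset_union_left))
            (measure_union_le _ _)
        have h3 : ν (D n) + ENNReal.ofReal c * ν (D n) < ν (D n) + ν (finSMul S (D n) \ D n) := by
          calc ν (D n) + ENNReal.ofReal c * ν (D n) = (1 + ENNReal.ofReal c) * ν (D n) := by
                rw [add_mul, one_mul]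
            _ < ν (finSMul S (D n)) := hlt
            _ ≤ ν (finSMul S (D n) \ D n) + ν (D n) := h2
            _ = ν (D n) + ν (finSMul S (D n) \ D n) := add_comm _ _
        have h4 : ENNReal.ofReal c * ν (D n) < ν (finSMul S (D n) \ D n) :=
          (ENNReal.add_lt_add_iff_left hDfin).1 h3
        have h5 : ENNReal.ofReal c * ENNReal.ofReal α ≤ ENNReal.ofReal c * ν (D n) :=
          mul_le_mul_right hsmall _
        exact absurd ((h5.trans_lt h4).trans_le (hbd n)) (not_lt.2 hn'.le)
end

section
/- Let Γ be a countable discrete group with a measurable action on a measure space (X,ν), and let Y ⊆ X be a domain of asymptotic expansion. Then for every β ∈ [1/2, 1) there exist a constant b(β) > 0 and a finite symmetric subset S(β) ⊆ Γ with 1 ∈ S(β) such that ν((S(β)·A) ∩ Y) > (1+b(β))·ν(A) for every measurable subset A ⊆ Y with (1/2)·ν(Y) ≤ ν(A) ≤ β·ν(Y). -/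
open MeasureTheory Set Filter Pointwise

/-- Lemma 3.6: if `Y` is a domain of asymptotic expansion then the
expansion estimate also holds for sets of measure between `ν(Y)/2` and `β·ν(Y)`. -/
theorem asymExpDomain_upper_range
    {Γ X : Type*} [Group Γ] [Countable Γ] [MulAction Γ X] [MeasurableSpace X]
    (ν : Measure X)
    (hmeas : ∀ γ : Γ, Measurable fun x : X => γ • x)
    (Y : Set X) (hYm : MeasurableSet Y) (hY0 : 0 < ν Y) (hYfin : ν Y < ⊤)
    (hdom : AsymExpDomain Γ ν Y) :
    ∀ β : ℝ, 1 / 2 ≤ β → β < 1 →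
      ∃ b : ℝ, 0 < b ∧ ∃ S : Finset Γ, SymmFin S ∧
        ∀ A : Set X, MeasurableSet A → A ⊆ Y →
          ν Y / 2 ≤ ν A → ν A ≤ ENNReal.ofReal β * ν Y →
          (1 + ENNReal.ofReal b) * ν A < ν (finSMul S A ∩ Y) := by
  intro β hbh hβ1
  have hβpos : (0:ℝ) < β := lt_of_lt_of_le (by norm_num) hbh
  have h1β : (0:ℝ) < 1 - β := by linarith
  have hα0 : 0 < (1 - β)/2 := by linarith
  have hα2 : (1 - β)/2 ≤ 1/2 := by linarith
  obtain ⟨c, hc, S, hS, hexp⟩ := hdom ((1 - β)/2) hα0 hα2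
  have h1c : (0:ℝ) < 1 + c := by linarith
  set b : ℝ := c * (1 - β) / (2 * (1 + c) * β) with hbdef
  have hb : 0 < b := by positivity
  have hbβ : b * β = c * (1 - β) / (2 * (1 + c)) := by
    rw [hbdef, div_mul_eq_mul_div, div_eq_div_iff (by positivity) (by positivity)]
    ring
  refine ⟨b, hb, S, hS, ?_⟩
  intro A hA hAY hhalf hupper
  by_contra hcon
  push_neg at hcon
  -- measurability of finSMul
  have hsmul_meas : ∀ T : Set X, MeasurableSet T → MeasurableSet (finSMul S T) := by
    intro T hT
    apply Set.Finite.measurableSet_biUnion S.finite_toSet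
    intro s _
    have hrepr : s • T = (fun x : X => s⁻¹ • x) ⁻¹' T := by
      ext x
      simp [Set.mem_smul_set_iff_inv_smul_mem]
    rw [hrepr]
    exact (hmeas s⁻¹) hT
  set B : Set X := Y \ finSMul S A with hBdef
  have hBm : MeasurableSet B := hYm.diff (hsmul_meas A hA)
  have hBY : B ⊆ Y := Set.diff_subset
  -- A ⊆ finSMul S A ∩ Y
  have hAsub : A ⊆ finSMul S A ∩ Y := by
    intro x hx
    refine ⟨Set.mem_iUnion₂.2 ⟨1, hS.1, ?_⟩, hAY hx⟩
    simpa using hx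
  -- finSMul S B ∩ Y ⊆ Y \ A
  have hdisj : finSMul S B ∩ Y ⊆ Y \ A := by
    rintro x ⟨hx, hxY⟩
    refine ⟨hxY, fun hxA => ?_⟩
    obtain ⟨s, hs, hxB⟩ := Set.mem_iUnion₂.1 hx
    rw [Set.mem_smul_set_iff_inv_smul_mem] at hxB
    exact hxB.2 (Set.mem_iUnion₂.2 ⟨s⁻¹, hS.2 s hs, Set.smul_mem_smul_set hxA⟩)
  -- abbreviations
  have hνYne : ν Y ≠ ⊤ := hYfin.ne
  have hνAne : ν A ≠ ⊤ := (lt_of_le_of_lt (measure_mono hAY) hYfin).ne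
  have hTY : finSMul S A ∩ Y ⊆ Y := Set.inter_subset_right
  have hνTle : ν (finSMul S A ∩ Y) ≤ ν Y := measure_mono hTY
  have hνTne : ν (finSMul S A ∩ Y) ≠ ⊤ := (lt_of_le_of_lt hνTle hYfin).ne
  have hνBne : ν B ≠ ⊤ := (lt_of_le_of_lt (measure_mono hBY) hYfin).ne
  set y : ℝ := (ν Y).toReal with hY'
  set a : ℝ := (ν A).toReal with hA'
  set t : ℝ := (ν (finSMul S A ∩ Y)).toReal with hT'
  have hy0 : 0 < y := ENNReal.toReal_pos hY0.ne' hνYne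
  have ha0 : 0 ≤ a := ENNReal.toReal_nonneg
  -- ν B = ν Y - ν (finSMul S A ∩ Y)
  have hBeq : B = Y \ (finSMul S A ∩ Y) := by
    ext x; simp only [hBdef, Set.mem_diff, Set.mem_inter_iff]; tauto
  have hνB : ν B = ν Y - ν (finSMul S A ∩ Y) := by
    rw [hBeq, measure_diff hTY ((hsmul_meas A hA).inter hYm).nullMeasurableSet hνTne]
  have hBr : (ν B).toReal = y - t := by
    rw [hνB, ENNReal.toReal_sub_of_le hνTle hνYne]
  -- real versions of the hypotheses
  have hta : a ≤ t := by
    rw [hA', hT']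
    exact ENNReal.toReal_mono hνTne (measure_mono hAsub)
  have hhalf' : y / 2 ≤ a := by
    have := ENNReal.toReal_mono hνAne hhalf
    rwa [ENNReal.toReal_div, ENNReal.toReal_ofNat] at this
  have hupper' : a ≤ β * y := by
    have := ENNReal.toReal_mono (ENNReal.mul_ne_top ENNReal.ofReal_ne_top hνYne) hupper
    rwa [ENNReal.toReal_mul, ENNReal.toReal_ofReal hβpos.le] at this
  have hcon' : t ≤ (1 + b) * a := by
    have := ENNReal.toReal_mono
      (ENNReal.mul_ne_top (ENNReal.add_ne_top.2 ⟨ENNReal.one_ne_top, ENNReal.ofReal_ne_top⟩) hνAne)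
      hcon
    rwa [ENNReal.toReal_mul, ENNReal.toReal_add ENNReal.one_ne_top ENNReal.ofReal_ne_top,
      ENNReal.toReal_one, ENNReal.toReal_ofReal hb.le] at this
  -- key intermediate: t ≤ (1 - (1-β)/2) * y
  have hkey : t ≤ (1 - (1 - β)/2) * y := by
    have h1 : (1 + b) * a ≤ (1 + b) * (β * y) := by nlinarith
    have h2 : (1 + b) * (β * y) = (β + b * β) * y := by ring
    have h3 : b * β ≤ (1 - β) / 2 := by
      rw [hbβ]
      rw [div_le_div_iff₀ (by linarith) (by norm_num)]
      nlinarith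
    nlinarith
  -- apply expansion to B
  have hlow : ENNReal.ofReal ((1 - β)/2) * ν Y ≤ ν B := by
    rw [← ENNReal.toReal_le_toReal (ENNReal.mul_ne_top ENNReal.ofReal_ne_top hνYne) hνBne, hBr,
      ENNReal.toReal_mul, ENNReal.toReal_ofReal hα0.le]
    nlinarith
  have hup : ν B ≤ ν Y / 2 := by
    rw [← ENNReal.toReal_le_toReal hνBne ((ENNReal.div_lt_top hνYne (by norm_num)).ne), hBr,
      ENNReal.toReal_div, ENNReal.toReal_ofNat]
    nlinarith
  have hexpB := hexp B hBm hBY hlow hup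
  have hSB : ν (finSMul S B ∩ Y) ≤ ν (Y \ A) := measure_mono hdisj
  have hYA : (ν (Y \ A)).toReal = y - a := by
    rw [measure_diff hAY hA.nullMeasurableSet hνAne,
      ENNReal.toReal_sub_of_le (measure_mono hAY) hνYne]
  have hfinal : (1 + c) * (y - t) < y - a := by
    have hlt := lt_of_lt_of_le hexpB hSB
    have := (ENNReal.toReal_lt_toReal
      (ENNReal.mul_ne_top (ENNReal.add_ne_top.2 ⟨ENNReal.one_ne_top, ENNReal.ofReal_ne_top⟩) hνBne)
      ((lt_of_le_of_lt (measure_mono Set.diff_subset) hYfin).ne)).2 hlt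
    rwa [ENNReal.toReal_mul, ENNReal.toReal_add ENNReal.one_ne_top ENNReal.ofReal_ne_top,
      ENNReal.toReal_one, ENNReal.toReal_ofReal hc.le, hYA, hBr] at this
  -- derive the contradiction
  have hbβ' : b * β * (1 + c) = c * (1 - β) / 2 := by
    rw [hbβ]; field_simp
  nlinarith [mul_pos hc hy0, mul_nonneg (mul_nonneg hb.le hβpos.le) hy0.le,
    mul_le_mul_of_nonneg_left hcon' h1c.le,
    mul_le_mul_of_nonneg_left hupper' (by positivity : (0:ℝ) ≤ (1 + b) * (1 + c))]
end

section
/- Let ν and ν' be two equivalent σ-finite measures on a space X (each absolutely continuous with respect to the other), and let Γ ↷ X be a measurable action of a countable discrete group. If Y ⊆ X is a measurable subset of positive finite ν-measure and positive finite ν'-measure, then Y is a domain of asymptotic expansion with respect to ν if and only if Y is a domain of asymptotic expansion with respect to ν'. -/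
open MeasureTheory Set Filter Pointwise

set_option linter.unusedSectionVars false
set_option linter.unusedVariables false

section AuxLemmas

variable {Γ X : Type*} [Group Γ] [MulAction Γ X] [MeasurableSpace X]

lemma mem_finSMul {S : Finset Γ} {A : Set X} {x : X} :
    x ∈ finSMul S A ↔ ∃ s ∈ S, x ∈ s • A := by
  simp [finSMul]

lemma finSMul_measurableSet (hmeas : ∀ γ : Γ, Measurable fun x : X => γ • x)
    (S : Finset Γ) {A : Set X} (hA : MeasurableSet A) : MeasurableSet (finSMul S A) := by
  refine S.measurableSet_biUnion fun s _ => ?_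
  have h : s • A = (fun x : X => s⁻¹ • x) ⁻¹' A := by
    ext x
    simp [Set.mem_smul_set_iff_inv_smul_mem]
  rw [h]
  exact (hmeas s⁻¹) hA

lemma finSMul_mono {S : Finset Γ} {A B : Set X} (h : A ⊆ B) :
    finSMul S A ⊆ finSMul S B :=
  Set.iUnion₂_mono fun s _ => Set.smul_set_mono h

lemma subset_finSMul {S : Finset Γ} (h1 : (1 : Γ) ∈ S) (A : Set X) :
    A ⊆ finSMul S A := by
  intro x hx
  exact mem_finSMul.2 ⟨1, h1, by simpa using hx⟩

lemma finSMul_mul [DecidableEq Γ] (S T : Finset Γ) (A : Set X) :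
    finSMul (S * T) A = finSMul S (finSMul T A) := by
  ext x
  simp only [mem_finSMul]
  constructor
  · rintro ⟨u, hu, hxu⟩
    obtain ⟨s, hs, t, ht, rfl⟩ := Finset.mem_mul.1 hu
    rw [mul_smul] at hxu
    exact ⟨s, hs, Set.smul_set_mono (fun y hy => mem_finSMul.2 ⟨t, ht, hy⟩) hxu⟩
  · rintro ⟨s, hs, hx⟩
    obtain ⟨y, hy, rfl⟩ := hx
    obtain ⟨t, ht, hyt⟩ := mem_finSMul.1 hy
    refine ⟨s * t, Finset.mul_mem_mul hs ht, ?_⟩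
    rw [mul_smul]
    exact Set.smul_mem_smul_set hyt

lemma one_mem_pow [DecidableEq Γ] {S : Finset Γ} (h1 : (1 : Γ) ∈ S) (n : ℕ) :
    (1 : Γ) ∈ S ^ n := by
  induction n with
  | zero => simp
  | succ n ih =>
    rw [pow_succ]
    simpa using Finset.mul_mem_mul ih h1

lemma symmFin_pow [DecidableEq Γ] {S : Finset Γ} (hS : SymmFin S) (n : ℕ) :
    SymmFin (S ^ n) := by
  refine ⟨one_mem_pow hS.1 n, ?_⟩
  induction n with
  | zero => intro s hs; rw [pow_zero, Finset.mem_one] at hs ⊢; simp [hs]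
  | succ n ih =>
    intro s hs
    rw [pow_succ, Finset.mem_mul] at hs
    obtain ⟨b, hb, c, hc, rfl⟩ := hs
    rw [pow_succ']
    rw [mul_inv_rev]
    exact Finset.mul_mem_mul (hS.2 c hc) (ih b hb)

lemma iter_subset_finSMul_pow [DecidableEq Γ] (S : Finset Γ) (Y A : Set X) :
    ∀ n : ℕ, (fun T => finSMul S T ∩ Y)^[n] A ⊆ finSMul (S ^ n) A := by
  intro n
  induction n with
  | zero => simp [finSMul, pow_zero]
  | succ n ih =>
    rw [Function.iterate_succ_apply']
    refine subset_trans (Set.inter_subset_left) ?_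
    refine subset_trans (finSMul_mono ih) ?_
    rw [pow_succ']
    rw [finSMul_mul]

section Iter

variable (S : Finset Γ) (Y : Set X)

lemma iter_subset_Y {A : Set X} (hA : A ⊆ Y) :
    ∀ n : ℕ, (fun T => finSMul S T ∩ Y)^[n] A ⊆ Y := by
  intro n
  cases n with
  | zero => exact hA
  | succ n =>
    rw [Function.iterate_succ_apply']
    exact Set.inter_subset_right

lemma iter_measurableSet (hmeas : ∀ γ : Γ, Measurable fun x : X => γ • x)
    (hYm : MeasurableSet Y) {A : Set X} (hA : MeasurableSet A) :
    ∀ n : ℕ, MeasurableSet ((fun T => finSMul S T ∩ Y)^[n] A) := by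
  intro n
  induction n with
  | zero => exact hA
  | succ n ih =>
    rw [Function.iterate_succ_apply']
    exact (finSMul_measurableSet hmeas S ih).inter hYm

lemma iter_monotone (h1 : (1 : Γ) ∈ S) {A : Set X} (hA : A ⊆ Y) :
    Monotone fun n => (fun T => finSMul S T ∩ Y)^[n] A := by
  refine monotone_nat_of_le_succ fun n => ?_
  rw [Function.iterate_succ_apply']
  exact Set.subset_inter (subset_finSMul h1 _) (iter_subset_Y S Y hA n)

lemma subset_iter (h1 : (1 : Γ) ∈ S) {A : Set X} (hA : A ⊆ Y) (n : ℕ) :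
    A ⊆ (fun T => finSMul S T ∩ Y)^[n] A :=
  iter_monotone S Y h1 hA (Nat.zero_le n)

lemma swap_disjoint (hSsym : SymmFin S) {C B : Set X} (hC : C ⊆ Y)
    (h : C ∩ (finSMul S B ∩ Y) = ∅) : (finSMul S C ∩ Y) ∩ B = ∅ := by
  rw [Set.eq_empty_iff_forall_notMem] at h ⊢
  rintro x ⟨⟨hxS, hxY⟩, hxB⟩
  obtain ⟨s, hs, hxs⟩ := mem_finSMul.1 hxS
  rw [Set.mem_smul_set_iff_inv_smul_mem] at hxs
  refine h (s⁻¹ • x) ⟨hxs, mem_finSMul.2 ⟨s⁻¹, hSsym.2 s hs, Set.smul_mem_smul_set hxB⟩, hC hxs⟩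

lemma iter_disjoint (hSsym : SymmFin S) :
    ∀ (j : ℕ) (B D : Set X), D ⊆ Y → D ∩ (fun T => finSMul S T ∩ Y)^[j] B = ∅ →
      (fun T => finSMul S T ∩ Y)^[j] D ∩ B = ∅ := by
  intro j
  induction j with
  | zero => intro B D _ h; exact h
  | succ j ih =>
    intro B D hD h
    rw [Function.iterate_succ_apply] at h
    have h2 := ih (finSMul S B ∩ Y) D hD h
    have h3 := swap_disjoint S Y hSsym
      (iter_subset_Y S Y hD j) h2
    rw [Function.iterate_succ_apply']
    exact h3

end Iter

end AuxLemmas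

open scoped ENNReal NNReal

lemma uniform_ac {X : Type*} [MeasurableSpace X] {μ μ' : Measure X} [IsFiniteMeasure μ']
    (hac : μ' ≪ μ) {ε : ℝ≥0∞} (hε : 0 < ε) :
    ∃ δ : ℝ≥0∞, 0 < δ ∧ ∀ s : Set X, MeasurableSet s → μ s < δ → μ' s < ε := by
  by_contra hcon
  push_neg at hcon
  choose s hsm hsμ hsε using fun n : ℕ =>
    hcon ((2 : ℝ≥0∞)⁻¹ ^ n) (ENNReal.pow_pos (ENNReal.inv_pos.2 ENNReal.ofNat_ne_top) n)
  have htsum : (∑' i, μ (s i)) ≠ ∞ := by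
    refine ne_of_lt (lt_of_le_of_lt (ENNReal.tsum_le_tsum fun i => (hsμ i).le) ?_)
    rw [ENNReal.tsum_geometric, ENNReal.one_sub_inv_two, inv_inv]
    exact ENNReal.ofNat_lt_top
  have hlim : μ (limsup s atTop) = 0 := measure_limsup_atTop_eq_zero htsum
  have hlim' : μ' (limsup s atTop) = 0 := hac hlim
  set U : ℕ → Set X := fun N => ⋃ i, s (i + N) with hU
  have hUeq : limsup s atTop = ⋂ N, U N := by
    rw [limsup_eq_iInf_iSup_of_nat']
    simp only [Set.iSup_eq_iUnion, Set.iInf_eq_iInter, hU]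
  have hUanti : Antitone U := by
    intro N M hNM x hx
    obtain ⟨i, hi⟩ := Set.mem_iUnion.1 hx
    refine Set.mem_iUnion.2 ⟨i + (M - N), ?_⟩
    have h : i + (M - N) + N = i + M := by omega
    rw [h]
    exact hi
  have htend : Tendsto (μ' ∘ U) atTop (nhds (μ' (⋂ N, U N))) :=
    tendsto_measure_iInter_atTop
      (fun N => (MeasurableSet.iUnion fun i => hsm (i + N)).nullMeasurableSet)
      hUanti ⟨0, measure_ne_top μ' _⟩
  have hge : ε ≤ μ' (⋂ N, U N) := by
    refine ge_of_tendsto htend (Eventually.of_forall fun N => ?_)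
    calc ε ≤ μ' (s (0 + N)) := hsε (0 + N)
    _ ≤ μ' (U N) := measure_mono (Set.subset_iUnion (fun i => s (i + N)) 0)
  rw [← hUeq, hlim'] at hge
  exact absurd (lt_of_lt_of_le hε hge) (lt_irrefl _)

lemma final_arith {a x w d : ℝ≥0∞} (ha : a ≠ ∞) (ha0 : a ≠ 0) (hx : x ≤ a / 2)
    (hd : d < a / 4) (hw : a ≤ w + d) : (1 + ENNReal.ofReal (1/2)) * x < w := by
  have hhalf : ENNReal.ofReal (1/2 : ℝ) ≤ 1 := by
    rw [← ENNReal.ofReal_one]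
    exact ENNReal.ofReal_le_ofReal (by norm_num)
  rcases eq_or_ne w ∞ with hw' | hw'
  · rw [hw']
    refine lt_of_le_of_lt (le_trans (mul_le_mul_right hx _) ?_) (Ne.lt_top ha)
    calc (1 + ENNReal.ofReal (1/2)) * (a / 2) ≤ 2 * (a / 2) := by
          refine mul_le_mul_left ?_ _
          calc (1 : ℝ≥0∞) + ENNReal.ofReal (1/2) ≤ 1 + 1 := add_le_add_right hhalf 1
          _ = 2 := one_add_one_eq_two
      _ = a := by rw [mul_comm, ENNReal.div_mul_cancel two_ne_zero ENNReal.ofNat_ne_top]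
  · have hd' : d ≠ ∞ := hd.ne_top
    have hx' : x ≠ ∞ := hx.trans_lt (Ne.lt_top (by simp [ENNReal.div_eq_top, ha])) |>.ne
    have h1 : ((1 : ℝ≥0∞) + ENNReal.ofReal (1/2)).toReal = 1 + 1/2 := by
      rw [ENNReal.toReal_add ENNReal.one_ne_top (by simp), ENNReal.toReal_one,
        ENNReal.toReal_ofReal (by norm_num)]
    rw [← ENNReal.toReal_lt_toReal (ENNReal.mul_ne_top (by simp [ENNReal.add_ne_top]) hx') hw']
    rw [ENNReal.toReal_mul, h1]
    have ha2 : a / 2 ≠ ∞ := by simp [ENNReal.div_eq_top, ha]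
    have ha4 : a / 4 ≠ ∞ := by simp [ENNReal.div_eq_top, ha]
    have hxr : x.toReal ≤ a.toReal / 2 := by
      have h := ENNReal.toReal_mono ha2 hx
      rwa [ENNReal.toReal_div] at h
    have hdr : d.toReal < a.toReal / 4 := by
      have h := ENNReal.toReal_strict_mono ha4 hd
      rwa [ENNReal.toReal_div] at h
    have hwr : a.toReal ≤ w.toReal + d.toReal := by
      have h := ENNReal.toReal_mono (by rw [ENNReal.add_ne_top]; exact ⟨hw', hd'⟩) hw
      rwa [ENNReal.toReal_add hw' hd'] at h
    have ha' : 0 < a.toReal := ENNReal.toReal_pos ha0 ha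
    have hxnn : 0 ≤ x.toReal := ENNReal.toReal_nonneg
    norm_num
    nlinarith

lemma reach_half {Γ X : Type*} [Group Γ] [MulAction Γ X] [MeasurableSpace X]
    (hmeas : ∀ γ : Γ, Measurable fun x : X => γ • x)
    (ν : Measure X) {Y : Set X} (hYm : MeasurableSet Y) (hY0 : ν Y ≠ 0) (hYfin : ν Y ≠ ⊤)
    {β c : ℝ} (hβ : 0 < β) (hc : 0 < c) {S : Finset Γ} (hS1 : (1 : Γ) ∈ S)
    (hexp : AsymExpandsOn ν Y β c S)
    {m : ℕ} (hm : 1/2 < (1 + c) ^ m * β)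
    (B : Set X) (hBm : MeasurableSet B) (hBY : B ⊆ Y)
    (hBlow : ENNReal.ofReal β * ν Y ≤ ν B) :
    ν Y / 2 < ν ((fun T => finSMul S T ∩ Y)^[m] B) := by
  by_contra hcon
  push_neg at hcon
  have hhalf : ∀ j, j ≤ m → ν ((fun T => finSMul S T ∩ Y)^[j] B) ≤ ν Y / 2 := fun j hj =>
    le_trans (measure_mono (iter_monotone S Y hS1 hBY hj)) hcon
  have grow : ∀ i, i ≤ m →
      ENNReal.ofReal ((1 + c) ^ i) * (ENNReal.ofReal β * ν Y) ≤
        ν ((fun T => finSMul S T ∩ Y)^[i] B) := by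
    intro i
    induction i with
    | zero => intro _; simpa using hBlow
    | succ i ih =>
      intro hisucc
      have hi : i ≤ m := Nat.le_of_succ_le hisucc
      have h1 := ih hi
      have hup := hhalf i hi
      have hlow : ENNReal.ofReal β * ν Y ≤ ν ((fun T => finSMul S T ∩ Y)^[i] B) :=
        le_trans hBlow (measure_mono (subset_iter S Y hS1 hBY i))
      have hstep := hexp _ (iter_measurableSet S Y hmeas hYm hBm i)
        (iter_subset_Y S Y hBY i) hlow hup
      have hstep' : (1 + ENNReal.ofReal c) * ν ((fun T => finSMul S T ∩ Y)^[i] B) <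
          ν ((fun T => finSMul S T ∩ Y)^[i+1] B) := by
        rw [Function.iterate_succ_apply']
        exact hstep
      calc ENNReal.ofReal ((1 + c) ^ (i+1)) * (ENNReal.ofReal β * ν Y)
          = (1 + ENNReal.ofReal c) *
            (ENNReal.ofReal ((1 + c) ^ i) * (ENNReal.ofReal β * ν Y)) := by
            rw [pow_succ, ENNReal.ofReal_mul (by positivity),
              ENNReal.ofReal_add one_pos.le hc.le, ENNReal.ofReal_one]
            ring
        _ ≤ (1 + ENNReal.ofReal c) * ν ((fun T => finSMul S T ∩ Y)^[i] B) :=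
            mul_le_mul_right h1 _
        _ ≤ ν ((fun T => finSMul S T ∩ Y)^[i+1] B) := hstep'.le
  have hfin := grow m le_rfl
  have hcmp : ν Y / 2 < ENNReal.ofReal ((1 + c) ^ m * β) * ν Y := by
    have h2 : (ν Y) / 2 = ENNReal.ofReal (1/2) * ν Y := by
      rw [div_eq_mul_inv, mul_comm]
      congr 1
      rw [ENNReal.ofReal_div_of_pos two_pos, ENNReal.ofReal_one, ENNReal.ofReal_ofNat, one_div]
    rw [h2]
    refine ENNReal.mul_lt_mul_left hY0 hYfin ?_
    exact (ENNReal.ofReal_lt_ofReal_iff (lt_trans (by norm_num) hm)).2 hm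
  rw [ENNReal.ofReal_mul (by positivity), mul_assoc] at hcmp
  exact absurd (lt_of_lt_of_le hcmp (le_trans hfin (hhalf m le_rfl)))
    (lt_irrefl _)

lemma asymExpDomain_mono {Γ X : Type*} [Group Γ] [MulAction Γ X] [MeasurableSpace X]
    (ν ν' : Measure X) (hac' : ν' ≪ ν)
    (hmeas : ∀ γ : Γ, Measurable fun x : X => γ • x)
    (Y : Set X) (hYm : MeasurableSet Y)
    (hY0 : 0 < ν Y) (hYfin : ν Y < ⊤) (hY0' : 0 < ν' Y) (hYfin' : ν' Y < ⊤)
    (h : AsymExpDomain Γ ν Y) : AsymExpDomain Γ ν' Y := by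
  classical
  intro α' hα'0 hα'half
  set μ : Measure X := ν.restrict Y with hμ
  set μ' : Measure X := ν'.restrict Y with hμ'
  haveI : IsFiniteMeasure μ' := by
    constructor
    rw [hμ', Measure.restrict_apply_univ]
    exact hYfin'
  have hacr : μ' ≪ μ := hac'.restrict Y
  have hε₁ : (0 : ℝ≥0∞) < ENNReal.ofReal α' * ν' Y :=
    ENNReal.mul_pos (ENNReal.ofReal_pos.2 hα'0).ne' hY0'.ne'
  obtain ⟨δ₀, hδ₀pos, hδ₀⟩ := uniform_ac hacr hε₁
  have hε₂ : (0 : ℝ≥0∞) < ν' Y / 4 := ENNReal.div_pos hY0'.ne' (by norm_num)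
  obtain ⟨η₀, hη₀pos, hη₀⟩ := uniform_ac hacr hε₂
  set δ₁ : ℝ≥0∞ := min δ₀ (min η₀ 1) with hδ₁
  have hδ₁pos : 0 < δ₁ := lt_min hδ₀pos (lt_min hη₀pos one_pos)
  have hδ₁top : δ₁ ≠ ∞ :=
    ne_top_of_le_ne_top ENNReal.one_ne_top (le_trans (min_le_right _ _) (min_le_right _ _))
  set q : ℝ≥0∞ := δ₁ / (2 * ν Y) with hq
  have hqpos : 0 < q := ENNReal.div_pos hδ₁pos.ne' (ENNReal.mul_ne_top (by simp) hYfin.ne)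
  have hqtop : q ≠ ∞ := by
    rw [hq, Ne, ENNReal.div_eq_top]
    push_neg
    refine ⟨fun _ => ?_, fun h' => absurd h' hδ₁top⟩
    simp [hY0.ne']
  set β : ℝ := min (1/2) q.toReal with hβdef
  have hβ0 : 0 < β := lt_min (by norm_num) (ENNReal.toReal_pos hqpos.ne' hqtop)
  have hβhalf : β ≤ 1/2 := min_le_left _ _
  have hkey : ENNReal.ofReal β * ν Y ≤ δ₁ := by
    have h1 : ENNReal.ofReal β ≤ q := by
      rw [← ENNReal.ofReal_toReal hqtop]
      exact ENNReal.ofReal_le_ofReal (min_le_right _ _)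
    calc ENNReal.ofReal β * ν Y ≤ q * ν Y := mul_le_mul_left h1 _
    _ = δ₁ * ((2 * ν Y)⁻¹ * ν Y) := by rw [hq, div_eq_mul_inv, mul_assoc]
    _ ≤ δ₁ * ((ν Y)⁻¹ * ν Y) := by
        refine mul_le_mul_right (mul_le_mul_left (ENNReal.inv_le_inv.2 ?_) _) _
        exact le_mul_of_one_le_left zero_le one_le_two
    _ ≤ δ₁ * 1 :=
        mul_le_mul_right (le_of_eq (ENNReal.inv_mul_cancel hY0.ne' hYfin.ne)) _
    _ = δ₁ := mul_one _
  obtain ⟨c, hc, S, hSsym, hSexp⟩ := h β hβ0 hβhalf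
  obtain ⟨m, hm⟩ := pow_unbounded_of_one_lt (1/(2*β) : ℝ) (by linarith : (1:ℝ) < 1 + c)
  have hm' : 1/2 < (1+c)^m * β := by
    have h2 := mul_lt_mul_of_pos_right hm hβ0
    have h3 : (1/(2*β))*β = 1/2 := by field_simp
    rwa [h3] at h2
  refine ⟨1/2, by norm_num, S ^ (m + m), symmFin_pow hSsym _, ?_⟩
  intro A hAm hAY hAlow hAup
  have hμA : μ A = ν A := by
    rw [hμ, Measure.restrict_apply hAm, Set.inter_eq_self_of_subset_left hAY]
  have hμ'A : μ' A = ν' A := by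
    rw [hμ', Measure.restrict_apply hAm, Set.inter_eq_self_of_subset_left hAY]
  have hνA : ENNReal.ofReal β * ν Y ≤ ν A := by
    refine le_trans hkey ?_
    by_contra hlt
    push_neg at hlt
    have h4 := hδ₀ A hAm (by rw [hμA]; exact lt_of_lt_of_le hlt (min_le_left _ _))
    rw [hμ'A] at h4
    exact absurd (lt_of_le_of_lt hAlow h4) (lt_irrefl _)
  set g : Set X → Set X := fun T => finSMul S T ∩ Y with hg
  set W : Set X := g^[m+m] A with hW
  have hWm : MeasurableSet W := iter_measurableSet S Y hmeas hYm hAm (m+m)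
  have hWY : W ⊆ Y := iter_subset_Y S Y hAY (m+m)
  have hDsmall : ν (Y \ W) < ENNReal.ofReal β * ν Y := by
    by_contra hcon
    push_neg at hcon
    have hDm : MeasurableSet (Y \ W) := hYm.diff hWm
    have hDY : Y \ W ⊆ Y := Set.diff_subset
    have hdisj0 : (Y \ W) ∩ g^[m] (g^[m] A) = ∅ := by
      rw [← Function.iterate_add_apply]
      exact Set.diff_inter_self
    have hdisj := iter_disjoint S Y hSsym m (g^[m] A) (Y \ W) hDY hdisj0
    have h1 := reach_half hmeas ν hYm hY0.ne' hYfin.ne hβ0 hc hSsym.1 hSexp hm'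
      _ hDm hDY hcon
    have h2 := reach_half hmeas ν hYm hY0.ne' hYfin.ne hβ0 hc hSsym.1 hSexp hm'
      A hAm hAY hνA
    have hsum : ν (g^[m] (Y \ W)) + ν (g^[m] A) ≤ ν Y := by
      rw [← measure_union (Set.disjoint_iff_inter_eq_empty.2 hdisj)
        (iter_measurableSet S Y hmeas hYm hAm m)]
      exact measure_mono (Set.union_subset (iter_subset_Y S Y hDY m)
        (iter_subset_Y S Y hAY m))
    have hbad : ν Y < ν Y := by
      calc ν Y = ν Y / 2 + ν Y / 2 := (ENNReal.add_halves _).symm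
      _ < ν (g^[m] (Y \ W)) + ν (g^[m] A) := ENNReal.add_lt_add h1 h2
      _ ≤ ν Y := hsum
    exact absurd hbad (lt_irrefl _)
  have hν'D : ν' (Y \ W) < ν' Y / 4 := by
    have hDm : MeasurableSet (Y \ W) := hYm.diff hWm
    have hμD : μ (Y \ W) = ν (Y \ W) := by
      rw [hμ, Measure.restrict_apply hDm, Set.inter_eq_self_of_subset_left Set.diff_subset]
    have h5 := hη₀ (Y \ W) hDm (by
      rw [hμD]
      exact lt_of_lt_of_le hDsmall (le_trans hkey
        (le_trans (min_le_right _ _) (min_le_left _ _))))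
    rwa [hμ', Measure.restrict_apply hDm,
      Set.inter_eq_self_of_subset_left Set.diff_subset] at h5
  have hcover : ν' Y ≤ ν' (finSMul (S^(m+m)) A ∩ Y) + ν' (Y \ W) := by
    refine le_trans (measure_mono ?_) (measure_union_le _ _)
    intro x hxY
    by_cases hxW : x ∈ W
    · exact Or.inl ⟨iter_subset_finSMul_pow S Y A (m+m) hxW, hxY⟩
    · exact Or.inr ⟨hxY, hxW⟩
  exact final_arith hYfin'.ne hY0'.ne' hAup hν'D hcover


/-- Lemma 3.7: being a domain of asymptotic expansion only depends on
the measure class. -/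
theorem asymExpDomain_of_equivalent_measures
    {Γ X : Type*} [Group Γ] [Countable Γ] [MulAction Γ X] [MeasurableSpace X]
    (ν ν' : Measure X) [SigmaFinite ν] [SigmaFinite ν']
    (hac : ν ≪ ν') (hac' : ν' ≪ ν)
    (hmeas : ∀ γ : Γ, Measurable fun x : X => γ • x)
    (Y : Set X) (hYm : MeasurableSet Y)
    (hY0 : 0 < ν Y) (hYfin : ν Y < ⊤) (hY0' : 0 < ν' Y) (hYfin' : ν' Y < ⊤) :
    AsymExpDomain Γ ν Y ↔ AsymExpDomain Γ ν' Y :=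
  ⟨fun h => asymExpDomain_mono ν ν' hac' hmeas Y hYm hY0 hYfin hY0' hYfin' h,
   fun h => asymExpDomain_mono ν' ν hac hmeas Y hYm hY0' hYfin' hY0 hYfin h⟩
end

section
/- Let Γ be a countable discrete group with a measurable action on a measure space (X,ν), let Y ⊆ X be a domain, let Z ⊆ Y be a measurable subset, let ε ∈ (0,1), and let S ⊆ Γ be a finite symmetric subset with 1 ∈ S. Suppose F ⊆ Y ∖ Z is a maximal (ε,S)-Følner set in Y relative to Z. Then for every measurable subset A ⊆ Y ∖ (F ∪ Z) with 0 < ν(A) ≤ ν(Y)/2 − ν(F), one has ν((∂_S A ∩ Y) ∖ (F ∪ Z)) > ε·ν(A). -/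
open MeasureTheory Set Filter Pointwise

/-- Lemma 4.4: the complement of a maximal `(ε,S)`-Følner set expands. -/
theorem complement_of_maximal_foelner_expands
    {Γ X : Type*} [Group Γ] [Countable Γ] [MulAction Γ X] [MeasurableSpace X]
    (ν : Measure X)
    (hmeas : ∀ γ : Γ, Measurable fun x : X => γ • x)
    (Y : Set X) (hYm : MeasurableSet Y) (hY0 : 0 < ν Y) (hYfin : ν Y < ⊤)
    (Z : Set X) (hZm : MeasurableSet Z) (hZsub : Z ⊆ Y)
    (ε : ℝ) (hε0 : 0 < ε) (hε1 : ε < 1) (S : Finset Γ) (hS : SymmFin S)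
    (F : Set X) (hFm : MeasurableSet F) (hFsub : F ⊆ Y \ Z) (hFhalf : ν F ≤ ν Y / 2)
    (hFfol : ν ((finBdry S F ∩ Y) \ Z) ≤ ENNReal.ofReal ε * ν F)
    (hFmax : ∀ F' : Set X, MeasurableSet F' → F' ⊆ Y \ Z → ν F' ≤ ν Y / 2 →
      ν ((finBdry S F' ∩ Y) \ Z) ≤ ENNReal.ofReal ε * ν F' →
      ν (F \ F') = 0 → ν (F' \ F) = 0) :
    ∀ A : Set X, MeasurableSet A → A ⊆ Y \ (F ∪ Z) → 0 < ν A →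
      ν A ≤ ν Y / 2 - ν F →
      ENNReal.ofReal ε * ν A < ν ((finBdry S A ∩ Y) \ (F ∪ Z)) := by
  intro A hAm hAsub hA0 hAle
  by_contra h
  push_neg at h
  have hFA : Disjoint F A :=
    Set.disjoint_left.mpr fun x hxF hxA => (hAsub hxA).2 (Or.inl hxF)
  have hsub' : F ∪ A ⊆ Y \ Z := by
    intro x hx
    rcases hx with hx | hx
    · exact hFsub hx
    · exact ⟨(hAsub hx).1, fun hz => (hAsub hx).2 (Or.inr hz)⟩
  have hm' : MeasurableSet (F ∪ A) := hFm.union hAm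
  have hmeasU : ν (F ∪ A) = ν F + ν A := measure_union hFA hAm
  have hhalf : ν (F ∪ A) ≤ ν Y / 2 := by
    rw [hmeasU]
    calc ν F + ν A ≤ ν F + (ν Y / 2 - ν F) := add_le_add le_rfl hAle
    _ = ν Y / 2 := add_tsub_cancel_of_le hFhalf
  have hsmul : finSMul S (F ∪ A) = finSMul S F ∪ finSMul S A := by
    simp only [finSMul, smul_set_union]
    ext x
    simp only [Set.mem_iUnion, Set.mem_union]
    constructor
    · rintro ⟨s, hs, hx | hx⟩
      · exact Or.inl ⟨s, hs, hx⟩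
      · exact Or.inr ⟨s, hs, hx⟩
    · rintro (⟨s, hs, hx⟩ | ⟨s, hs, hx⟩)
      · exact ⟨s, hs, Or.inl hx⟩
      · exact ⟨s, hs, Or.inr hx⟩
  have hbd : (finBdry S (F ∪ A) ∩ Y) \ Z ⊆
      ((finBdry S F ∩ Y) \ Z) ∪ ((finBdry S A ∩ Y) \ (F ∪ Z)) := by
    rintro x ⟨⟨hxB, hxY⟩, hxZ⟩
    obtain ⟨hxS, hxnFA⟩ := hxB
    rw [hsmul] at hxS
    have hxF : x ∉ F := fun hx => hxnFA (Or.inl hx)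
    have hxA : x ∉ A := fun hx => hxnFA (Or.inr hx)
    rcases hxS with hxS | hxS
    · exact Or.inl ⟨⟨⟨hxS, hxF⟩, hxY⟩, hxZ⟩
    · exact Or.inr ⟨⟨⟨hxS, hxA⟩, hxY⟩, fun hx => hx.elim hxF hxZ⟩
  have hfol : ν ((finBdry S (F ∪ A) ∩ Y) \ Z) ≤ ENNReal.ofReal ε * ν (F ∪ A) := by
    calc ν ((finBdry S (F ∪ A) ∩ Y) \ Z)
        ≤ ν (((finBdry S F ∩ Y) \ Z) ∪ ((finBdry S A ∩ Y) \ (F ∪ Z))) := measure_mono hbd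
      _ ≤ ν ((finBdry S F ∩ Y) \ Z) + ν ((finBdry S A ∩ Y) \ (F ∪ Z)) := measure_union_le _ _
      _ ≤ ENNReal.ofReal ε * ν F + ENNReal.ofReal ε * ν A := add_le_add hFfol h
      _ = ENNReal.ofReal ε * ν (F ∪ A) := by rw [hmeasU, mul_add]
  have hdiff : ν (F \ (F ∪ A)) = 0 := by
    have : F \ (F ∪ A) = ∅ := by
      ext x; simp only [Set.mem_diff, Set.mem_union, Set.mem_empty_iff_false]
      tauto
    simp [this]
  have h0 : ν ((F ∪ A) \ F) = 0 := hFmax (F ∪ A) hm' hsub' hhalf hfol hdiff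
  have hAsub' : A ⊆ (F ∪ A) \ F := fun x hx =>
    ⟨Or.inr hx, fun hxF => (hAsub hx).2 (Or.inl hxF)⟩
  have : ν A = 0 := le_antisymm (h0 ▸ measure_mono hAsub') zero_le
  exact hA0.ne' this
end
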